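/- Let R be a local integral domain that is a maximal proper subring of its quotient field K (i.e., R ⊂ K is a minimal ring extension). Then R is a valuation ring of Krull dimension one. -/

import Mathlib

/-- A local domain that is a maximal proper subring of its quotient field is a
valuation ring of Krull dimension one. -/
theorem stmt_13 (K : Type*) [Field K] (R : Subring K) [IsLocalRing R]
    [IsFractionRing R K] (hmin : IsCoatom R) :
    ValuationRing R ∧ ringKrullDim R = 1 := by
  -- R is not a field
  have hnf : ¬ IsField ↥R := by
    intro hf
    apply hmin.1
    rw [eq_top_iff]
    intro x _
    obtain ⟨a, b, hb, rfl⟩ := IsFractionRing.div_surjective (A := ↥R) x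
    have hb0 : (b : ↥R) ≠ 0 := nonZeroDivisors.ne_zero hb
    obtain ⟨c, hc⟩ := hf.mul_inv_cancel hb0
    have hcK : (b : K) * (c : K) = 1 := by exact_mod_cast congrArg (Subtype.val) hc
    have hbK0 : (b : K) ≠ 0 := fun e => hb0 (Subtype.ext e)
    have : (algebraMap ↥R K a) / (algebraMap ↥R K b) = (a : K) * (c : K) := by
      show (a : K) / (b : K) = (a : K) * (c : K)
      rw [div_eq_iff hbK0, mul_assoc, mul_comm (c : K) (b : K), hcK, mul_one]
    rw [this]
    exact mul_mem a.2 c.2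
  have hm0 : IsLocalRing.maximalIdeal ↥R ≠ ⊥ := by
    intro h
    exact hnf ((IsLocalRing.isField_iff_maximalIdeal_eq).mpr h)
  -- R is maximal as a local subring under domination
  set A : LocalSubring K := ⟨R⟩ with hA
  have hmax : IsMax A := by
    intro B hB
    obtain ⟨h1, h2⟩ := hB
    rcases lt_or_eq_of_le h1 with hlt | heq
    · exfalso
      have htop : B.toSubring = ⊤ := hmin.2 _ hlt
      obtain ⟨a, ha, ha0⟩ := Submodule.exists_mem_ne_zero_of_ne_bot hm0
      have ha0' : (a : K) ≠ 0 := fun e => ha0 (Subtype.ext e)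
      have hu : IsUnit (Subring.inclusion h1 a) := by
        refine IsUnit.of_mul_eq_one ⟨(a : K)⁻¹, by rw [htop]; trivial⟩ ?_
        exact Subtype.ext (mul_inv_cancel₀ ha0')
      have := h2.1 _ hu
      exact (IsLocalRing.mem_maximalIdeal a).mp ha this
    · exact le_of_eq (LocalSubring.toSubring_injective heq.symm)
  -- R is a valuation subring
  obtain ⟨V, hV⟩ := LocalSubring.exists_valuationRing_of_isMax hmax
  have hVR : V.toSubring = R := congrArg LocalSubring.toSubring hV
  have hval : ValuationRing ↥R := by
    rw [ValuationRing.iff_isInteger_or_isInteger ↥R K]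
    intro x
    rcases V.mem_or_inv_mem x with h | h
    · exact Or.inl ⟨⟨x, by rw [← hVR]; exact h⟩, rfl⟩
    · exact Or.inr ⟨⟨x⁻¹, by rw [← hVR]; exact h⟩, rfl⟩
  refine ⟨hval, ?_⟩
  -- every prime of R is ⊥ or the maximal ideal
  have hprime : ∀ (p : Ideal ↥R), p.IsPrime → p = ⊥ ∨ p = IsLocalRing.maximalIdeal ↥R := by
    intro p hp
    by_contra hcon
    push_neg at hcon
    obtain ⟨hpb, hpm⟩ := hcon
    set S := (LocalSubring.ofPrime R p).toSubring with hS
    have hRS : R ≤ S := LocalSubring.le_ofPrime R p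
    have hloc : IsLocalization.AtPrime ↥S p := inferInstance
    -- S ≠ ⊤
    have hSne : S ≠ ⊤ := by
      intro htop
      obtain ⟨a, ha, ha0⟩ := Submodule.exists_mem_ne_zero_of_ne_bot (by
        intro h; exact hpb h : p ≠ ⊥)
      have ha0' : (a : K) ≠ 0 := fun e => ha0 (Subtype.ext e)
      have hmem : algebraMap ↥R ↥S a ∈ IsLocalRing.maximalIdeal ↥S :=
        (IsLocalization.AtPrime.to_map_mem_maximal_iff ↥S p a).mpr ha
      have hu : IsUnit (algebraMap ↥R ↥S a) := by
        refine IsUnit.of_mul_eq_one ⟨(a : K)⁻¹, by rw [htop]; trivial⟩ ?_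
        exact Subtype.ext (mul_inv_cancel₀ ha0')
      exact (IsLocalRing.mem_maximalIdeal _).mp hmem hu
    -- R < S
    have hp_le : p ≤ IsLocalRing.maximalIdeal ↥R := IsLocalRing.le_maximalIdeal hp.ne_top
    obtain ⟨b, hbm, hbp⟩ : ∃ b, b ∈ IsLocalRing.maximalIdeal ↥R ∧ b ∉ p := by
      by_contra h
      push_neg at h
      exact hpm (le_antisymm hp_le h)
    have hbu : IsUnit (algebraMap ↥R ↥S b) :=
      IsLocalization.map_units (M := p.primeCompl) ↥S ⟨b, hbp⟩
    obtain ⟨u, hu⟩ := hbu.exists_right_inv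
    have hb0 : (b : K) ≠ 0 := by
      intro e
      have : b = (0 : ↥R) := Subtype.ext (by simpa using e)
      exact hbp (by rw [this]; exact p.zero_mem)
    have hmulK : (b : K) * (u : K) = 1 := by
      have h2 := congrArg (algebraMap ↥S K) hu
      rw [map_mul, map_one, ← IsScalarTower.algebraMap_apply ↥R ↥S K b] at h2
      exact h2
    have huval : (u : K) = (b : K)⁻¹ := (inv_eq_of_mul_eq_one_right hmulK).symm
    have hbinvS : (b : K)⁻¹ ∈ S := huval ▸ u.2
    have hbinvR : (b : K)⁻¹ ∉ R := by
      intro hmem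
      have : IsUnit b := IsUnit.of_mul_eq_one (a := b) ⟨(b : K)⁻¹, hmem⟩
        (Subtype.ext (mul_inv_cancel₀ hb0))
      exact (IsLocalRing.mem_maximalIdeal b).mp hbm this
    have hlt : R < S := lt_of_le_of_ne hRS (fun e => hbinvR (le_of_eq e.symm hbinvS))
    exact hSne (hmin.2 _ hlt)
  -- the two primes
  have hbot_prime : (⊥ : Ideal ↥R).IsPrime := Ideal.bot_prime
  have hm_prime : (IsLocalRing.maximalIdeal ↥R).IsPrime :=
    (IsLocalRing.maximalIdeal.isMaximal ↥R).isPrime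
  -- Krull dimension = 1
  have hle : ringKrullDim ↥R ≤ 1 := by
    rw [ringKrullDim, Order.krullDim]
    apply iSup_le
    intro q
    by_contra hq
    push_neg at hq
    have hlen : 2 ≤ q.length := by
      by_contra h
      push_neg at h
      interval_cases h : q.length <;> simp_all <;> exact absurd hq (not_lt.mpr zero_le_one)
    have h01 : q ⟨0, by omega⟩ < q ⟨1, by omega⟩ := q.strictMono (by simp [Fin.lt_def])
    have h12 : q ⟨1, by omega⟩ < q ⟨2, by omega⟩ := q.strictMono (by simp [Fin.lt_def])
    rcases hprime (q ⟨1, by omega⟩).asIdeal (q ⟨1, by omega⟩).isPrime with h1 | h1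
    · have : (q ⟨0, by omega⟩).asIdeal < ⊥ := h1 ▸ h01
      exact not_lt_bot this
    · rcases hprime (q ⟨2, by omega⟩).asIdeal (q ⟨2, by omega⟩).isPrime with h2 | h2
      · have : (q ⟨1, by omega⟩).asIdeal < ⊥ := h2 ▸ h12
        exact not_lt_bot this
      · have : IsLocalRing.maximalIdeal ↥R < IsLocalRing.maximalIdeal ↥R := by
          have := h12
          rw [show ((q ⟨1, by omega⟩) < (q ⟨2, by omega⟩)) ↔
            (q ⟨1, by omega⟩).asIdeal < (q ⟨2, by omega⟩).asIdeal from Iff.rfl, h1, h2] at this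
          exact this
        exact lt_irrefl _ this
  have hge : 1 ≤ ringKrullDim ↥R := by
    rw [ringKrullDim]
    have hltp : (⟨⊥, hbot_prime⟩ : PrimeSpectrum ↥R) <
        ⟨IsLocalRing.maximalIdeal ↥R, hm_prime⟩ := by
      exact lt_of_le_of_ne bot_le (by simpa [PrimeSpectrum.ext_iff] using Ne.symm hm0)
    let s : LTSeries (PrimeSpectrum ↥R) :=
      RelSeries.singleton _ ⟨IsLocalRing.maximalIdeal ↥R, hm_prime⟩
    have hhead : (⟨⊥, hbot_prime⟩ : PrimeSpectrum ↥R) < s.head := hltp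
    let q : LTSeries (PrimeSpectrum ↥R) := s.cons ⟨⊥, hbot_prime⟩ hhead
    have h := Order.LTSeries.length_le_krullDim q
    simpa [q, s] using h
  exact le_antisymm hle hge
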